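/- Let a ≤ x₀ ≤ b and let g : [a,b] → ℝ be continuous with g > 0. For x ∈ [a,b], x ≠ x₀, set s(x) = (∫_{x₀}^{x} g(t)(x−t) dt) / (g(x₀)(x−x₀)²), and set s(x₀) = 1/2. Then s is continuous on [a,b] (in particular s(x) → 1/2 as x → x₀). Moreover, if g is monotone nondecreasing then s is monotone nondecreasing on [a,b], and if g is monotone nonincreasing then s is monotone nonincreasing on [a,b]. -/

import Mathlib

open Real Set

noncomputable section

/-- Properties of the weighted average `s(x) = (∫_{x₀}^{x} g(t)(x−t) dt)/(g(x₀)(x−x₀)²)`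
(with `s(x₀) = 1/2`): it is continuous on `[a,b]`, and it inherits monotonicity
(or antitonicity) from `g`. -/
theorem statement19 (a b x₀ : ℝ) (ha : a ≤ x₀) (hb : x₀ ≤ b)
    (g : ℝ → ℝ) (hg : ContinuousOn g (Set.Icc a b))
    (hgpos : ∀ t ∈ Set.Icc a b, 0 < g t)
    (s : ℝ → ℝ)
    (hs : ∀ x, s x = if x = x₀ then 1 / 2 else
      (∫ t in x₀..x, g t * (x - t)) / (g x₀ * (x - x₀) ^ 2)) :
    ContinuousOn s (Set.Icc a b) ∧
    (MonotoneOn g (Set.Icc a b) → MonotoneOn s (Set.Icc a b)) ∧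
    (AntitoneOn g (Set.Icc a b) → AntitoneOn s (Set.Icc a b)) := by
  have hab : a ≤ b := ha.trans hb
  have hx₀ : x₀ ∈ Set.Icc a b := ⟨ha, hb⟩
  set G : ℝ → ℝ := fun t => g (Set.projIcc a b hab t) with hGdef
  have hGcont : Continuous G := (hg.restrict).comp (continuous_projIcc)
  have hGeq : ∀ t ∈ Set.Icc a b, G t = g t := by
    intro t ht
    simp [hGdef, Set.projIcc_of_mem hab ht]
  have hGmem : ∀ t : ℝ, (Set.projIcc a b hab t : ℝ) ∈ Set.Icc a b := fun t =>
    (Set.projIcc a b hab t).2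
  have hGpos : ∀ t, 0 < G t := fun t => hgpos _ (hGmem t)
  have hGx₀ : G x₀ = g x₀ := hGeq x₀ hx₀
  have hGx₀ne : G x₀ ≠ 0 := (hGpos x₀).ne'
  -- the key representation
  set F : ℝ → ℝ := fun x => ∫ u in (0:ℝ)..1, G (x₀ + u * (x - x₀)) * (1 - u) with hFdef
  have hintcont : ∀ x : ℝ, Continuous fun u : ℝ => G (x₀ + u * (x - x₀)) * (1 - u) := by
    intro x
    exact (hGcont.comp (by continuity)).mul (by continuity)
  have key : ∀ x ∈ Set.Icc a b, s x = F x / G x₀ := by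
    intro x hx
    have h2 : (∫ u in (0:ℝ)..1, (1 - u)) = 1/2 := by
      rw [intervalIntegral.integral_comp_sub_left (fun u : ℝ => u) 1]
      norm_num
    by_cases hxe : x = x₀
    · have hFx₀ : F x₀ = G x₀ / 2 := by
        have e0 : F x₀ = ∫ u in (0:ℝ)..1, G x₀ * (1 - u) := by
          apply intervalIntegral.integral_congr
          intro u _
          show G (x₀ + u * (x₀ - x₀)) * (1 - u) = G x₀ * (1 - u)
          norm_num
        rw [e0, intervalIntegral.integral_const_mul, h2]
        ring
      rw [hs, if_pos hxe, hxe, hFx₀]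
      field_simp
    · have hc : x - x₀ ≠ 0 := sub_ne_zero.mpr hxe
      -- replace g by G in the integral
      have hsub : Set.uIcc x₀ x ⊆ Set.Icc a b := Set.uIcc_subset_Icc hx₀ hx
      have e1 : (∫ t in x₀..x, g t * (x - t)) = ∫ t in x₀..x, G t * (x - t) := by
        apply intervalIntegral.integral_congr
        intro t ht
        show g t * (x - t) = G t * (x - t)
        rw [hGeq t (hsub ht)]
      -- substitution
      have e2 : (∫ u in (0:ℝ)..1, (fun t => G t * (x - t)) ((x - x₀) * u + x₀))
          = (x - x₀)⁻¹ • ∫ t in (x - x₀) * 0 + x₀..(x - x₀) * 1 + x₀, G t * (x - t) :=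
        intervalIntegral.integral_comp_mul_add (fun t => G t * (x - t)) hc x₀
      have e3 : (fun u : ℝ => (fun t => G t * (x - t)) ((x - x₀) * u + x₀))
          = fun u : ℝ => (x - x₀) * (G (x₀ + u * (x - x₀)) * (1 - u)) := by
        funext u
        have harg : (x - x₀) * u + x₀ = x₀ + u * (x - x₀) := by ring
        rw [harg]
        ring
      rw [e3, intervalIntegral.integral_const_mul] at e2
      have e4 : (x - x₀) * 0 + x₀ = x₀ := by ring
      have e5 : (x - x₀) * 1 + x₀ = x := by ring
      rw [e4, e5, smul_eq_mul] at e2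
      have e6 : (∫ t in x₀..x, G t * (x - t)) = (x - x₀) ^ 2 * F x := by
        have := e2
        field_simp at this
        rw [hFdef]
        have h7 : (x - x₀) * ((x - x₀) * ∫ u in (0:ℝ)..1, G (x₀ + u * (x - x₀)) * (1 - u))
            = (x - x₀) * ((x - x₀)⁻¹ * ∫ t in x₀..x, G t * (x - t)) := by rw [e2]
        rw [← mul_assoc, ← sq, ← mul_assoc, mul_inv_cancel₀ hc, one_mul] at h7
        exact h7.symm
      rw [hs, if_neg hxe, e1, e6, ← hGx₀]
      rw [div_eq_div_iff (by positivity) hGx₀ne]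
      ring
  -- continuity
  have hFcont : Continuous F := by
    have huncurry : Continuous
        (Function.uncurry fun (x u : ℝ) => G (x₀ + u * (x - x₀)) * (1 - u)) := by
      have h1 : Continuous fun p : ℝ × ℝ => x₀ + p.2 * (p.1 - x₀) :=
        continuous_const.add (continuous_snd.mul (continuous_fst.sub continuous_const))
      exact (hGcont.comp h1).mul (continuous_const.sub continuous_snd)
    exact intervalIntegral.continuous_parametric_intervalIntegral_of_continuous'
      (μ := MeasureTheory.volume) huncurry 0 1
  have hScont : ContinuousOn s (Set.Icc a b) := by
    apply ContinuousOn.congr (f := fun x => F x / G x₀)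
    · exact (hFcont.div_const _).continuousOn
    · intro x hx; exact key x hx
  have hint : ∀ x : ℝ, IntervalIntegrable
      (fun u : ℝ => G (x₀ + u * (x - x₀)) * (1 - u)) MeasureTheory.volume 0 1 :=
    fun x => (hintcont x).intervalIntegrable 0 1
  refine ⟨hScont, ?_, ?_⟩
  · -- monotone case
    intro hm x hx y hy hxy
    have hGm : Monotone G := fun p q hpq =>
      hm (hGmem p) (hGmem q) (Subtype.coe_le_coe.mpr (Set.monotone_projIcc hab hpq))
    rw [key x hx, key y hy]
    rw [div_le_div_iff_of_pos_right (hGpos x₀)]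
    apply intervalIntegral.integral_mono_on (by norm_num : (0:ℝ) ≤ 1) (hint x) (hint y)
    intro u hu
    have harg : x₀ + u * (x - x₀) ≤ x₀ + u * (y - x₀) := by nlinarith [hu.1]
    exact mul_le_mul_of_nonneg_right (hGm harg) (by linarith [hu.2])
  · -- antitone case
    intro hm x hx y hy hxy
    have hGm : Antitone G := fun p q hpq =>
      hm (hGmem p) (hGmem q) (Subtype.coe_le_coe.mpr (Set.monotone_projIcc hab hpq))
    rw [key x hx, key y hy]
    rw [div_le_div_iff_of_pos_right (hGpos x₀)]
    apply intervalIntegral.integral_mono_on (by norm_num : (0:ℝ) ≤ 1) (hint y) (hint x)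
    intro u hu
    have harg : x₀ + u * (x - x₀) ≤ x₀ + u * (y - x₀) := by nlinarith [hu.1]
    exact mul_le_mul_of_nonneg_right (hGm harg) (by linarith [hu.2])
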